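/- Let P and P' be closed paths in Y of the same length, where Y is a finite graph with an edge-free G-action and quotient graph of groups 𝕏. Then π(P) = π(P') if and only if P' = gP for some g ∈ G. -/
import Mathlib


structure LegGraph where
  V : Type
  H : Type
  [fV : Fintype V]
  [fH : Fintype H]
  [dV : DecidableEq V]
  [dH : DecidableEq H]
  r : H → V
  bar : H → H
  bar_bar : ∀ h, bar (bar h) = h

attribute [instance] LegGraph.fV LegGraph.fH LegGraph.dV LegGraph.dH

namespace LegGraph

def IsClosedPath (X : LegGraph) {n : ℕ} (h : ZMod n → X.H) : Prop :=
  ∀ j, X.r (h (j + 1)) = X.r (X.bar (h j))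

def IsReducedPath (X : LegGraph) {n : ℕ} (h : ZMod n → X.H) : Prop :=
  ∀ j, h (j + 1) ≠ X.bar (h j)

def HasPeriod (X : LegGraph) {n : ℕ} (h : ZMod n → X.H) (d : ℕ) : Prop :=
  ∀ j, h (j + (d : ZMod n)) = h j

def IsPrimitive (X : LegGraph) {n : ℕ} (h : ZMod n → X.H) : Prop :=
  ∀ d : ℕ, 0 < d → d ∣ n → X.HasPeriod h d → d = n

end LegGraph

/-- An edge-free Galois covering of graphs with legs: a group `G` acting on a finite
graph `Y`, freely on half-edges, together with the quotient graph `X = Y/G`, a lifted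
spanning tree (recorded via the vertex section `vT`), a choice of identity sheet
(recorded via the half-edge section `sec`) and the Frobenius elements `F(h)`, as in
the construction of the quotient graph of groups `𝕏 = Y ⫽ G`. -/
structure EdgeFreeCover where
  Y : LegGraph
  G : Type
  [grpG : Group G]
  [finG : Fintype G]
  [decG : DecidableEq G]
  act : G → Y.H → Y.H
  actV : G → Y.V → Y.V
  act_one : ∀ h, act 1 h = h
  act_mul : ∀ g g' h, act (g * g') h = act g (act g' h)
  actV_one : ∀ v, actV 1 v = v
  actV_mul : ∀ g g' v, actV (g * g') v = actV g (actV g' v)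
  act_r : ∀ g h, Y.r (act g h) = actV g (Y.r h)
  act_bar : ∀ g h, Y.bar (act g h) = act g (Y.bar h)
  free : ∀ g h, act g h = h → g = 1
  X : LegGraph
  πV : Y.V → X.V
  πH : Y.H → X.H
  πV_surj : Function.Surjective πV
  πH_r : ∀ f, X.r (πH f) = πV (Y.r f)
  πH_bar : ∀ f, X.bar (πH f) = πH (Y.bar f)
  πH_eq : ∀ f f', πH f = πH f' ↔ ∃ g, act g f = f'
  πV_eq : ∀ v v', πV v = πV v' ↔ ∃ g, actV g v = v'
  vT : X.V → Y.V
  vT_sec : ∀ v, πV (vT v) = v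
  sec : X.H → Y.H
  sec_sec : ∀ h, πH (sec h) = h
  sec_root : ∀ h, Y.r (sec h) = vT (X.r h)
  F : X.H → G
  F_bar : ∀ h, F (X.bar h) = (F h)⁻¹
  F_spec : ∀ h, act (F h) (sec (X.bar h)) = Y.bar (sec h)

attribute [instance] EdgeFreeCover.grpG EdgeFreeCover.finG EdgeFreeCover.decG

namespace EdgeFreeCover

variable (E : EdgeFreeCover)

/-- The sheet number `N(f)` of a half-edge `f` of `Y`: the unique `g ∈ G` with
`g · (π f)^S = f`. -/
noncomputable def N (f : E.Y.H) : E.G :=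
  Classical.choose ((E.πH_eq (E.sec (E.πH f)) f).mp (E.sec_sec (E.πH f)))

/-- Membership in the vertex group `X_v` of the quotient graph of groups:
the stabilizer of the chosen lift `v^T`. -/
def InStab (v : E.X.V) (g : E.G) : Prop := E.actV g (E.vT v) = E.vT v

/-- A closed path of length `n` in the quotient graph of groups `𝕏 = Y ⫽ G`,
recorded cyclically: half-edges `h j` and group elements `γ j` (with `γ j` the group
element immediately preceding `h j`), each lying in the vertex group at the root of
`h j`. -/
def IsClosedGPath {n : ℕ} (h : ZMod n → E.X.H) (γ : ZMod n → E.G) : Prop :=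
  E.X.IsClosedPath h ∧ ∀ j, E.InStab (E.X.r (h j)) (γ j)

/-- The path `g₀h₁g₁⋯g_{n-1}h_n` is reduced if for every `j` either `h_{j+1} ≠ h̄_j`
or the intervening group element is nontrivial. -/
def IsReducedGPath {n : ℕ} (h : ZMod n → E.X.H) (γ : ZMod n → E.G) : Prop :=
  ∀ j, h (j + 1) ≠ E.X.bar (h j) ∨ γ (j + 1) ≠ 1

/-- A closed path in `𝕏` has period `d` if it is invariant under rotation by `d`. -/
def GPathHasPeriod {n : ℕ} (h : ZMod n → E.X.H) (γ : ZMod n → E.G) (d : ℕ) : Prop :=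
  ∀ j, h (j + (d : ZMod n)) = h j ∧ γ (j + (d : ZMod n)) = γ j

/-- A closed path in `𝕏` is primitive if it is not a proper power. -/
def GPathIsPrimitive {n : ℕ} (h : ZMod n → E.X.H) (γ : ZMod n → E.G) : Prop :=
  ∀ d : ℕ, 0 < d → d ∣ n → E.GPathHasPeriod h γ d → d = n

/-- The Frobenius element `F(P) = g₀F(h₁)g₁F(h₂)⋯g_{n-1}F(h_n)` of a closed path
in `𝕏` (with chosen basepoint). -/
def Frob {n : ℕ} (h : ZMod n → E.X.H) (γ : ZMod n → E.G) : E.G :=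
  (((List.range n).map fun i => γ (i : ZMod n) * E.F (h (i : ZMod n)))).prod

/-- The lift `π⁻¹(Q, s)` of a closed path `Q` in `𝕏` starting on the `s`-th sheet:
its `j`-th half-edge is `s · F(g₀h₁⋯h_j g_j) · h_{j+1}^S`. -/
def liftPath {n : ℕ} (h : ZMod n → E.X.H) (γ : ZMod n → E.G) (s : E.G)
    (j : ZMod n) : E.Y.H :=
  E.act (s * (((List.range j.val).map fun i => γ (i : ZMod n) * E.F (h (i : ZMod n)))).prod
      * γ j) (E.sec (h j))

/-- The half-edge components of the image `π(P)` of a closed path `P` in `Y`. -/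
def imgH {n : ℕ} (f : ZMod n → E.Y.H) (j : ZMod n) : E.X.H := E.πH (f j)

/-- The group components of the image `π(P)` of a closed path `P` in `Y`:
`g_j = F(h_j)⁻¹ N(f_j)⁻¹ N(f_{j+1})` (cyclically, with `g₀ = F(h_n)⁻¹N(f_n)⁻¹N(f₁)`). -/
noncomputable def imgG {n : ℕ} (f : ZMod n → E.Y.H) (j : ZMod n) : E.G :=
  (E.F (E.πH (f (j - 1))))⁻¹ * (E.N (f (j - 1)))⁻¹ * E.N (f j)

lemma N_spec (f : E.Y.H) : E.act (E.N f) (E.sec (E.πH f)) = f :=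
  Classical.choose_spec ((E.πH_eq (E.sec (E.πH f)) f).mp (E.sec_sec (E.πH f)))

lemma act_cancel {g g' : E.G} {x : E.Y.H} (h : E.act g x = E.act g' x) : g = g' := by
  have h1 : E.act (g'⁻¹ * g) x = x := by
    rw [E.act_mul, h, ← E.act_mul, inv_mul_cancel, E.act_one]
  have := E.free _ _ h1
  exact (inv_mul_eq_one.mp this).symm

lemma πH_act (g : E.G) (x : E.Y.H) : E.πH (E.act g x) = E.πH x :=
  ((E.πH_eq x (E.act g x)).mpr ⟨g, rfl⟩).symm

lemma N_act (g : E.G) (x : E.Y.H) : E.N (E.act g x) = g * E.N x := by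
  apply E.act_cancel (x := E.sec (E.πH (E.act g x)))
  rw [E.N_spec, E.πH_act, E.act_mul, E.N_spec]

end EdgeFreeCover

/-- Two closed paths `P, P'` of the same length in `Y` have the same image
in the quotient graph of groups `𝕏 = Y ⫽ G` if and only if `P' = gP` for some
`g ∈ G`. -/
theorem image_eq_iff_translate (E : EdgeFreeCover) (n : ℕ) (hn : 1 ≤ n)
    (f f' : ZMod n → E.Y.H)
    (hf : E.Y.IsClosedPath f) (hf' : E.Y.IsClosedPath f') :
    ((∀ j, E.imgH f j = E.imgH f' j) ∧ (∀ j, E.imgG f j = E.imgG f' j)) ↔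
      ∃ g : E.G, ∀ j, E.act g (f j) = f' j := by
  haveI : NeZero n := ⟨by omega⟩
  constructor
  · rintro ⟨hH, hG⟩
    have hπ : ∀ j, E.πH (f j) = E.πH (f' j) := hH
    set g : ZMod n → E.G := fun j => E.N (f' j) * (E.N (f j))⁻¹ with hg
    have step : ∀ j, g (j + 1) = g j := by
      intro j
      have h1 := hG (j + 1)
      unfold EdgeFreeCover.imgG at h1
      rw [add_sub_cancel_right] at h1
      rw [hπ j] at h1
      have h2 : (E.N (f j))⁻¹ * E.N (f (j + 1))
          = (E.N (f' j))⁻¹ * E.N (f' (j + 1)) := by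
        rw [mul_assoc, mul_assoc] at h1
        exact mul_left_cancel h1
      have h3 : E.N (f' (j + 1)) = E.N (f' j) * ((E.N (f j))⁻¹ * E.N (f (j + 1))) := by
        rw [h2]; group
      simp only [hg]
      rw [h3]; group
    have key : ∀ k : ℕ, g (k : ZMod n) = g 0 := by
      intro k
      induction k with
      | zero => simp
      | succ m ih => rw [Nat.cast_succ, step, ih]
    have all : ∀ j, g j = g 0 := by
      intro j
      have := key j.val
      rwa [ZMod.natCast_val, ZMod.cast_id] at this
    refine ⟨g 0, fun j => ?_⟩
    rw [← all j]
    have : E.act (g j) (f j) = f' j := by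
      conv_lhs => rw [← E.N_spec (f j)]
      rw [← E.act_mul, hg]
      simp only [inv_mul_cancel_right, hπ j, E.N_spec]
    exact this
  · rintro ⟨g, hg⟩
    constructor
    · intro j
      exact (E.πH_eq (f j) (f' j)).mpr ⟨g, hg j⟩
    · intro j
      unfold EdgeFreeCover.imgG
      rw [← hg (j - 1), ← hg j, E.N_act, E.N_act, E.πH_act]
      group
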